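/- Let A, B ∈ Mₙ(ℂ). The following are equivalent: (1) there exist unitary matrices U₁, …, U_k and positive reals t₁, …, t_k with Σ tᵢ = 1 and A = Σ tᵢ Uᵢ B Uᵢ*; (2) for every C ∈ Mₙ(ℂ) there exists a unitary U with ‖A - U B U*‖₂ ≤ ‖C - U B U*‖₂, where ‖·‖₂ denotes the Frobenius norm. -/

import Mathlib

open Matrix

section AbstractLemmas

open Finset RealInnerProductSpace

/-- Summing a `dite`-extension along an embedding. -/
lemma sum_extend_aux {ι : Type*} [Fintype ι] {D : ℕ} (e : ι ↪ Fin D) {γ : Type*}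
    [AddCommMonoid γ] (f : ι → γ) :
    ∑ j : Fin D, (if h : ∃ i, e i = j then f h.choose else 0) = ∑ i, f i := by
  classical
  have h1 : ∑ j ∈ Finset.univ.image e, (if h : ∃ i, e i = j then f h.choose else 0)
      = ∑ j : Fin D, (if h : ∃ i, e i = j then f h.choose else 0) := by
    refine Finset.sum_subset (Finset.subset_univ _) ?_
    intro j _ hj
    rw [dif_neg]
    rintro ⟨i, rfl⟩
    exact hj (Finset.mem_image.mpr ⟨i, Finset.mem_univ i, rfl⟩)
  rw [← h1, Finset.sum_image (fun x _ y _ h => e.injective h)]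
  refine Finset.sum_congr rfl fun i _ => ?_
  have h : ∃ i', e i' = e i := ⟨i, rfl⟩
  rw [dif_pos h]
  congr 1
  exact e.injective h.choose_spec

/-- The convex hull of a compact set in a finite-dimensional normed space is compact. -/
lemma isCompact_convexHull_aux {F : Type*} [NormedAddCommGroup F] [NormedSpace ℝ F]
    [FiniteDimensional ℝ F] {S : Set F} (hS : IsCompact S) :
    IsCompact (convexHull ℝ S) := by
  classical
  rcases S.eq_empty_or_nonempty with rfl | ⟨s₀, hs₀⟩
  · simp [convexHull_empty]
  set D := Module.finrank ℝ F + 1 with hD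
  set W : Set ((Fin D → ℝ) × (Fin D → F)) :=
    (stdSimplex ℝ (Fin D)) ×ˢ (Set.univ.pi fun _ => S) with hW
  have hWc : IsCompact W := IsCompact.prod (isCompact_stdSimplex ℝ (Fin D)) (isCompact_univ_pi fun _ => hS)
  set g : (Fin D → ℝ) × (Fin D → F) → F := fun x => ∑ i, x.1 i • x.2 i with hg
  have hgc : Continuous g := by
    apply continuous_finset_sum
    intro i _
    exact ((continuous_apply i).comp continuous_fst).smul
      ((continuous_apply i).comp continuous_snd)
  have himg : g '' W = convexHull ℝ S := by
    apply Set.Subset.antisymm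
    · rintro x ⟨⟨w, z⟩, ⟨hw, hz⟩, rfl⟩
      rw [Set.mem_univ_pi] at hz
      exact Convex.sum_mem (convex_convexHull ℝ S) (fun i _ => hw.1 i) hw.2
        (fun i _ => subset_convexHull ℝ S (hz i))
    · intro x hx
      obtain ⟨ι, hι, z, w, hzS, hAI, hwpos, hw1, hrep⟩ :=
        eq_pos_convex_span_of_mem_convexHull hx
      have hcard : Fintype.card ι ≤ D := by
        calc Fintype.card ι ≤ Module.finrank ℝ ↥(vectorSpan ℝ (Set.range z)) + 1 :=
              hAI.card_le_finrank_succ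
          _ ≤ D := by exact Nat.add_le_add_right (Submodule.finrank_le _) 1
      obtain ⟨e⟩ : Nonempty (ι ↪ Fin D) := by
        rw [Function.Embedding.nonempty_iff_card_le]
        simpa using hcard
      refine ⟨⟨fun j => if h : ∃ i, e i = j then w h.choose else 0,
              fun j => if h : ∃ i, e i = j then z h.choose else s₀⟩, ⟨?_, ?_⟩, ?_⟩
      · constructor
        · intro j
          dsimp only
          split
          · exact (hwpos _).le
          · exact le_refl 0
        · rw [sum_extend_aux e w]; exact hw1
      · rw [Set.mem_univ_pi]
        intro j
        dsimp only
        split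
        · exact hzS (Set.mem_range_self _)
        · exact hs₀
      · dsimp [g]
        rw [← hrep, ← sum_extend_aux e (fun i => w i • z i)]
        refine Finset.sum_congr rfl fun j _ => ?_
        by_cases h : ∃ i, e i = j
        · rw [dif_pos h, dif_pos h, dif_pos h]
        · rw [dif_neg h, dif_neg h, dif_neg h, zero_smul]
  rw [← himg]
  exact hWc.image hgc

variable {F : Type*} [NormedAddCommGroup F] [InnerProductSpace ℝ F]

/-- Averaging: if `a` is a convex combination of the `p i`, then for any `c` some `p i`
is at least as close to `a` as to `c`. -/
lemma avg_exists {k : ℕ} {t : Fin k → ℝ} (ht : ∀ i, 0 < t i) (h1 : ∑ i, t i = 1)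
    (p : Fin k → F) {a : F} (c : F) (ha : a = ∑ i, t i • p i) :
    ∃ i, ‖a - p i‖ ≤ ‖c - p i‖ := by
  by_contra hcon
  push_neg at hcon
  have hk : k ≠ 0 := by rintro rfl; simp at h1
  have hne : (Finset.univ : Finset (Fin k)).Nonempty := by
    have : Nonempty (Fin k) := Fin.pos_iff_nonempty.mp (Nat.pos_of_ne_zero hk)
    exact Finset.univ_nonempty
  have hpos : 0 < ∑ i, t i * (‖a - p i‖ ^ 2 - ‖c - p i‖ ^ 2) := by
    refine Finset.sum_pos (fun i _ => mul_pos (ht i) ?_) hne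
    have := hcon i
    nlinarith [norm_nonneg (c - p i), norm_nonneg (a - p i)]
  have hid : ∑ i, t i * (‖a - p i‖ ^ 2 - ‖c - p i‖ ^ 2) = -‖a - c‖ ^ 2 := by
    have hterm : ∀ i, t i * (‖a - p i‖ ^ 2 - ‖c - p i‖ ^ 2)
        = t i * (‖a‖ ^ 2 - ‖c‖ ^ 2) - 2 * ⟪a - c, t i • p i⟫ := by
      intro i
      rw [norm_sub_sq_real, norm_sub_sq_real, real_inner_smul_right, inner_sub_left]
      ring
    calc ∑ i, t i * (‖a - p i‖ ^ 2 - ‖c - p i‖ ^ 2)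
        = ∑ i, (t i * (‖a‖ ^ 2 - ‖c‖ ^ 2) - 2 * ⟪a - c, t i • p i⟫) :=
          Finset.sum_congr rfl fun i _ => hterm i
      _ = (∑ i, t i) * (‖a‖ ^ 2 - ‖c‖ ^ 2) - 2 * ⟪a - c, ∑ i, t i • p i⟫ := by
          rw [Finset.sum_sub_distrib, ← Finset.sum_mul, inner_sum, Finset.mul_sum]
      _ = (‖a‖ ^ 2 - ‖c‖ ^ 2) - 2 * ⟪a - c, a⟫ := by rw [h1, one_mul, ← ha]
      _ = -‖a - c‖ ^ 2 := by
          rw [norm_sub_sq_real, inner_sub_left, real_inner_self_eq_norm_sq, real_inner_comm]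
          ring
  nlinarith [sq_nonneg ‖a - c‖]

/-- If `a` satisfies the minimizing property, then it is a positive convex combination of
points of the compact set `S`. -/
lemma rep_of_min [FiniteDimensional ℝ F] {S : Set F} (hS : IsCompact S) {a : F}
    (h : ∀ c : F, ∃ p ∈ S, ‖a - p‖ ≤ ‖c - p‖) :
    ∃ (k : ℕ) (p : Fin k → F) (t : Fin k → ℝ),
      (∀ i, p i ∈ S) ∧ (∀ i, 0 < t i) ∧ (∑ i, t i = 1) ∧ a = ∑ i, t i • p i := by
  classical
  have hmem : a ∈ convexHull ℝ S := by
    by_contra ha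
    have hMc : IsCompact (convexHull ℝ S) := isCompact_convexHull_aux hS
    have hconv : Convex ℝ (convexHull ℝ S) := convex_convexHull ℝ S
    have hne : (convexHull ℝ S).Nonempty := by
      obtain ⟨p, hp, -⟩ := h a
      exact ⟨p, subset_convexHull ℝ S hp⟩
    obtain ⟨c, hcM, hmin⟩ :=
      exists_norm_eq_iInf_of_complete_convex hne hMc.isClosed.isComplete hconv a
    have hinner := (norm_eq_iInf_iff_real_inner_le_zero hconv hcM).mp hmin
    obtain ⟨p, hpS, hple⟩ := h c
    have h2 : ⟪a - c, p - c⟫ ≤ 0 := hinner p (subset_convexHull ℝ S hpS)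
    have hac : a ≠ c := fun hac => ha (hac ▸ hcM)
    have h3 : ‖a - p‖ ^ 2 = ‖a - c‖ ^ 2 + 2 * ⟪a - c, c - p⟫ + ‖c - p‖ ^ 2 := by
      have h := norm_add_sq_real (a - c) (c - p)
      rw [show a - c + (c - p) = a - p by abel] at h
      exact h
    have h4 : ⟪a - c, c - p⟫ = -⟪a - c, p - c⟫ := by
      rw [show c - p = -(p - c) by abel, inner_neg_right]
    have h5 : 0 < ‖a - c‖ ^ 2 := by
      have h := norm_pos_iff.mpr (sub_ne_zero.mpr hac)
      positivity
    have h6 : ‖a - p‖ ^ 2 ≤ ‖c - p‖ ^ 2 :=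
      pow_le_pow_left₀ (norm_nonneg _) hple 2
    linarith
  obtain ⟨ι, hι, z, w, hzS, -, hwpos, hw1, hrep⟩ := eq_pos_convex_span_of_mem_convexHull hmem
  refine ⟨Fintype.card ι, fun i => z ((Fintype.equivFin ι).symm i),
    fun i => w ((Fintype.equivFin ι).symm i), fun i => hzS (Set.mem_range_self _),
    fun i => hwpos _, ?_, ?_⟩
  · rw [Equiv.sum_comp (Fintype.equivFin ι).symm w]; exact hw1
  · rw [Equiv.sum_comp (Fintype.equivFin ι).symm (fun i => w i • z i)]; exact hrep.symm

end AbstractLemmas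

/-- The Frobenius (Hilbert–Schmidt) norm of a complex matrix. -/
noncomputable def frobNorm {n : ℕ} (M : Matrix (Fin n) (Fin n) ℂ) : ℝ :=
  Real.sqrt ((Mᴴ * M).trace.re)

noncomputable instance euclideanRealInner (ι : Type*) [Fintype ι] :
    InnerProductSpace ℝ (EuclideanSpace ℂ ι) :=
  InnerProductSpace.rclikeToReal ℂ _

/-- Matrices with the Frobenius norm, as a real linear equivalence to Euclidean space. -/
noncomputable def matEquiv (n : ℕ) :
    Matrix (Fin n) (Fin n) ℂ ≃ₗ[ℝ] EuclideanSpace ℂ (Fin n × Fin n) where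
  toFun M := WithLp.toLp 2 (fun p : Fin n × Fin n => M p.1 p.2)
  map_add' M N := rfl
  map_smul' r M := rfl
  invFun v := Matrix.of fun i j => v (i, j)
  left_inv M := rfl
  right_inv v := rfl

lemma frobNorm_eq {n : ℕ} (M : Matrix (Fin n) (Fin n) ℂ) :
    frobNorm M = ‖matEquiv n M‖ := by
  rw [frobNorm, EuclideanSpace.norm_eq]
  congr 1
  have htr : (Mᴴ * M).trace = ∑ j, ∑ i, (starRingEnd ℂ) (M i j) * M i j := by
    rw [Matrix.trace]
    refine Finset.sum_congr rfl fun j _ => ?_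
    rw [Matrix.diag_apply, Matrix.mul_apply]
    refine Finset.sum_congr rfl fun i _ => ?_
    rw [Matrix.conjTranspose_apply]
    rfl
  rw [htr, Complex.re_sum]
  rw [Fintype.sum_prod_type, Finset.sum_comm]
  refine Finset.sum_congr rfl fun j _ => ?_
  rw [Complex.re_sum]
  refine Finset.sum_congr rfl fun i _ => ?_
  rw [mul_comm, Complex.mul_conj]
  simp [Complex.sq_norm]
  rfl

lemma isCompact_unitary (n : ℕ) :
    IsCompact (Matrix.unitaryGroup (Fin n) ℂ : Set (Matrix (Fin n) (Fin n) ℂ)) := by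
  have hclosed : IsClosed (Matrix.unitaryGroup (Fin n) ℂ : Set (Matrix (Fin n) (Fin n) ℂ)) := by
    have : (Matrix.unitaryGroup (Fin n) ℂ : Set (Matrix (Fin n) (Fin n) ℂ))
        = (fun U : Matrix (Fin n) (Fin n) ℂ => U * Uᴴ) ⁻¹' {1} := by
      ext U
      simp [Matrix.mem_unitaryGroup_iff, Matrix.star_eq_conjTranspose]
    rw [this]
    exact isClosed_singleton.preimage (continuous_id.matrix_mul continuous_id.matrix_conjTranspose)
  have hsub : (Matrix.unitaryGroup (Fin n) ℂ : Set (Matrix (Fin n) (Fin n) ℂ))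
      ⊆ {M : Matrix (Fin n) (Fin n) ℂ | ∀ i j, M i j ∈ Metric.closedBall (0 : ℂ) 1} := by
    intro U hU i j
    have h1 : (star U * U) j j = 1 := by
      rw [Matrix.mem_unitaryGroup_iff'.mp hU]; simp
    rw [Matrix.mul_apply] at h1
    have h2 : ∑ i', ‖U i' j‖ ^ 2 = 1 := by
      have h := congrArg Complex.re h1
      rw [Complex.re_sum] at h
      simp only [Complex.one_re] at h
      rw [← h]
      refine Finset.sum_congr rfl fun i' _ => ?_
      rw [Matrix.star_apply, mul_comm]
      rw [show U i' j * star (U i' j) = U i' j * (starRingEnd ℂ) (U i' j) from rfl,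
        Complex.mul_conj]
      rw [Complex.normSq_eq_norm_sq]
      rw [Complex.ofReal_re]
    have h3 : ‖U i j‖ ^ 2 ≤ 1 := by
      rw [← h2]
      exact Finset.single_le_sum (f := fun i' => ‖U i' j‖ ^ 2) (fun i' _ => sq_nonneg _)
        (Finset.mem_univ i)
    simp only [Metric.mem_closedBall, dist_zero_right]
    nlinarith [norm_nonneg (U i j)]
  have hK : IsCompact
      {M : Matrix (Fin n) (Fin n) ℂ | ∀ i j, M i j ∈ Metric.closedBall (0 : ℂ) 1} := by
    have : {M : Matrix (Fin n) (Fin n) ℂ | ∀ i j, M i j ∈ Metric.closedBall (0 : ℂ) 1}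
        = Set.univ.pi fun _ : Fin n => Set.univ.pi fun _ : Fin n =>
            Metric.closedBall (0 : ℂ) 1 := by
      ext M
      constructor
      · intro hM
        intro i _
        intro j _
        exact hM i j
      · intro hM i j
        exact hM i (Set.mem_univ i) j (Set.mem_univ j)
    rw [this]
    exact isCompact_univ_pi fun _ => isCompact_univ_pi fun _ => isCompact_closedBall _ _
  exact IsCompact.of_isClosed_subset hK hclosed hsub

theorem stmt_12 {n : ℕ} (A B : Matrix (Fin n) (Fin n) ℂ) :
    (∃ (k : ℕ) (U : Fin k → Matrix (Fin n) (Fin n) ℂ) (t : Fin k → ℝ),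
        (∀ i, U i ∈ Matrix.unitaryGroup (Fin n) ℂ) ∧ (∀ i, 0 < t i) ∧
        (∑ i, t i = 1) ∧ A = ∑ i, t i • (U i * B * star (U i))) ↔
    (∀ C : Matrix (Fin n) (Fin n) ℂ, ∃ U ∈ Matrix.unitaryGroup (Fin n) ℂ,
      frobNorm (A - U * B * star U) ≤ frobNorm (C - U * B * star U)) := by
  have hTcont : Continuous
      (fun V : Matrix (Fin n) (Fin n) ℂ => matEquiv n (V * B * star V)) := by
    have h1 : Continuous fun V : Matrix (Fin n) (Fin n) ℂ => V * B * star V := by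
      simp only [Matrix.star_eq_conjTranspose]
      exact (continuous_id.matrix_mul continuous_const).matrix_mul
        continuous_id.matrix_conjTranspose
    exact (matEquiv n).toLinearMap.continuous_of_finiteDimensional.comp h1
  constructor
  · rintro ⟨k, U, t, hU, ht, h1, hA⟩ C
    have ha : matEquiv n A = ∑ i, t i • matEquiv n (U i * B * star (U i)) := by
      rw [hA, map_sum]
      simp only [_root_.map_smul]
    obtain ⟨i, hi⟩ := avg_exists ht h1
      (fun i => matEquiv n (U i * B * star (U i))) (matEquiv n C) ha
    refine ⟨U i, hU i, ?_⟩
    rw [frobNorm_eq, frobNorm_eq, map_sub, map_sub]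
    exact hi
  · intro h
    have hS : IsCompact ((fun V : Matrix (Fin n) (Fin n) ℂ => matEquiv n (V * B * star V)) ''
        (Matrix.unitaryGroup (Fin n) ℂ : Set (Matrix (Fin n) (Fin n) ℂ))) :=
      (isCompact_unitary n).image hTcont
    have hmin : ∀ c : EuclideanSpace ℂ (Fin n × Fin n),
        ∃ p ∈ (fun V : Matrix (Fin n) (Fin n) ℂ => matEquiv n (V * B * star V)) ''
          (Matrix.unitaryGroup (Fin n) ℂ : Set (Matrix (Fin n) (Fin n) ℂ)),
          ‖matEquiv n A - p‖ ≤ ‖c - p‖ := by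
      intro c
      obtain ⟨U, hU, hle⟩ := h ((matEquiv n).symm c)
      refine ⟨matEquiv n (U * B * star U), ⟨U, hU, rfl⟩, ?_⟩
      rw [frobNorm_eq, frobNorm_eq, map_sub, map_sub, (matEquiv n).apply_symm_apply] at hle
      exact hle
    obtain ⟨k, p, t, hpS, ht, h1, ha⟩ := rep_of_min hS hmin
    choose V hV hVp using fun i => hpS i
    refine ⟨k, V, t, hV, ht, h1, ?_⟩
    apply (matEquiv n).injective
    rw [map_sum, ha]
    refine Finset.sum_congr rfl fun i _ => ?_
    rw [_root_.map_smul, ← hVp i]
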